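/- Let Q be symmetric positive definite, g, y, b ∈ ℝ^n, and A invertible with y = Av + b. The minimizer u* of u ↦ ⟨Aᵀg, u⟩ + ½(u - v)ᵀ AᵀQA (u - v) satisfies A u* + b = y - Q⁻¹ g. Hence the natural gradient descent update is invariant under invertible affine reparametrization x = Au + b. -/

import Mathlib

open Matrix

/-- Invariance of the natural gradient step under invertible affine reparametrization:
any minimizer `u*` of `u ↦ ⟨Aᵀg, u⟩ + ½(u-v)ᵀAᵀQA(u-v)` satisfies `A u* + b = y - Q⁻¹ g`. -/
theorem stmt11 {n : ℕ} (Q : Matrix (Fin n) (Fin n) ℝ) (hQ : Q.PosDef)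
    (A : Matrix (Fin n) (Fin n) ℝ) (hA : IsUnit A.det)
    (g b v y : Fin n → ℝ) (hy : y = A *ᵥ v + b) :
    ∀ u : Fin n → ℝ,
      (∀ u', (Aᵀ *ᵥ g) ⬝ᵥ u + (1 / 2 : ℝ) * ((u - v) ⬝ᵥ ((Aᵀ * Q * A) *ᵥ (u - v)))
          ≤ (Aᵀ *ᵥ g) ⬝ᵥ u' + (1 / 2 : ℝ) * ((u' - v) ⬝ᵥ ((Aᵀ * Q * A) *ᵥ (u' - v)))) →
      A *ᵥ u + b = y - Q⁻¹ *ᵥ g := by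
  intro u hu
  set M : Matrix (Fin n) (Fin n) ℝ := Aᵀ * Q * A with hM
  have hQdet : IsUnit Q.det := hQ.det_pos.ne'.isUnit
  have hATdet : IsUnit Aᵀ.det := by rwa [Matrix.det_transpose]
  have hMdet : IsUnit M.det := by
    rw [hM, Matrix.det_mul, Matrix.det_mul]
    exact (hATdet.mul hQdet).mul hA
  have hQsymm : Qᵀ = Q := by simpa using hQ.isHermitian.eq
  have hMsymm : Mᵀ = M := by
    rw [hM, Matrix.transpose_mul, Matrix.transpose_mul, Matrix.transpose_transpose,
      hQsymm, Matrix.mul_assoc]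
  -- the candidate minimizer
  set u₀ : Fin n → ℝ := v - M⁻¹ *ᵥ (Aᵀ *ᵥ g) with hu₀
  have hMd : M *ᵥ (u₀ - v) = -(Aᵀ *ᵥ g) := by
    rw [hu₀, sub_sub_cancel_left, Matrix.mulVec_neg, Matrix.mulVec_mulVec,
      Matrix.mul_nonsing_inv _ hMdet, Matrix.one_mulVec]
  -- quadratic expansion : f (u₀ + w) = f u₀ + ½ wᵀ M w
  have key : ∀ w : Fin n → ℝ,
      (Aᵀ *ᵥ g) ⬝ᵥ (u₀ + w) + (1 / 2 : ℝ) * (((u₀ + w) - v) ⬝ᵥ (M *ᵥ ((u₀ + w) - v)))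
        = ((Aᵀ *ᵥ g) ⬝ᵥ u₀ + (1 / 2 : ℝ) * ((u₀ - v) ⬝ᵥ (M *ᵥ (u₀ - v))))
          + (1 / 2 : ℝ) * (w ⬝ᵥ (M *ᵥ w)) := by
    intro w
    have hdw : (u₀ - v) ⬝ᵥ (M *ᵥ w) = w ⬝ᵥ (M *ᵥ (u₀ - v)) := by
      rw [Matrix.dotProduct_mulVec, ← Matrix.mulVec_transpose, hMsymm,
        dotProduct_comm]
    have h1 : (u₀ + w) - v = (u₀ - v) + w := by ring_nf
    rw [h1]
    simp only [Matrix.mulVec_add, dotProduct_add, add_dotProduct,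
      hdw, hMd, dotProduct_neg, neg_dotProduct]
    rw [dotProduct_comm w (Aᵀ *ᵥ g)]
    ring
  -- u = u₀
  have hle := hu u₀
  have hweq : u = u₀ + (u - u₀) := by ring_nf
  have hww : (1 / 2 : ℝ) * ((u - u₀) ⬝ᵥ (M *ᵥ (u - u₀))) ≤ 0 := by
    have h2 := key (u - u₀)
    rw [← hweq] at h2
    linarith [hle, h2.le, h2.ge]
  have huu : u = u₀ := by
    by_contra hne
    have hw0 : u - u₀ ≠ 0 := sub_ne_zero_of_ne hne
    have hAw : A *ᵥ (u - u₀) ≠ 0 := by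
      intro h0
      apply hw0
      have h3 := congrArg (fun z => A⁻¹ *ᵥ z) h0
      simpa [Matrix.mulVec_mulVec, Matrix.nonsing_inv_mul _ hA] using h3
    have hpos : 0 < (A *ᵥ (u - u₀)) ⬝ᵥ (Q *ᵥ (A *ᵥ (u - u₀))) := by
      have h4 := hQ.dotProduct_mulVec_pos hAw
      simpa using h4
    have heq : (u - u₀) ⬝ᵥ (M *ᵥ (u - u₀))
        = (A *ᵥ (u - u₀)) ⬝ᵥ (Q *ᵥ (A *ᵥ (u - u₀))) := by
      rw [hM, ← Matrix.mulVec_mulVec, ← Matrix.mulVec_mulVec,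
        Matrix.dotProduct_mulVec _ Aᵀ, Matrix.vecMul_transpose]
    linarith [heq ▸ hpos]
  -- conclude
  have hAMA : A * M⁻¹ * Aᵀ = Q⁻¹ := by
    calc A * M⁻¹ * Aᵀ = A * (A⁻¹ * (Q⁻¹ * Aᵀ⁻¹)) * Aᵀ := by
          rw [hM, Matrix.mul_inv_rev, Matrix.mul_inv_rev]
      _ = Q⁻¹ * Aᵀ⁻¹ * Aᵀ := by rw [Matrix.mul_nonsing_inv_cancel_left _ _ hA]
      _ = Q⁻¹ := Matrix.nonsing_inv_mul_cancel_right _ _ hATdet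
  rw [huu, hu₀, Matrix.mulVec_sub, hy, Matrix.mulVec_mulVec, Matrix.mulVec_mulVec, hAMA]
  abel
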